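/- Let φ : ℝⁿ → ℝ be twice continuously differentiable and σ-strongly convex for some σ > 0, let f : ℝⁿ → ℝ be continuously differentiable, let g : ℝⁿ → ℝ be convex, and set Ψ := f + g. Assume Ψ is bounded below on ℝⁿ and level-bounded. Fix λ > 0, α ∈ (0, 1), t_min ∈ (0, 1], and let sequences x^k ∈ ℝⁿ, d^k ∈ ℝⁿ, t_k ∈ [t_min, 1] satisfy, for every k: d^k minimizes u ↦ ⟨∇f(x^k), u⟩ + g(x^k + u) + (1/(2λ))⟨∇²φ(x^k)u, u⟩ over ℝⁿ; x^{k+1} = x^k + t_k·d^k; and Ψ(x^{k+1}) ≤ Ψ(x^k) + α t_k (⟨∇f(x^k), d^k⟩ + g(x^k + d^k) − g(x^k)). Then: (i) the sequence {x^k} is bounded; (ii) the series ∑_{k≥0} ‖d^k‖² converges, and in particular ‖d^k‖ → 0 as k → ∞. -/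

import Mathlib

open scoped RealInnerProductSpace

/-- Hessian–vector product `∇²φ(x) d`. -/
noncomputable def hessApply {n : ℕ} (φ : EuclideanSpace ℝ (Fin n) → ℝ)
    (x d : EuclideanSpace ℝ (Fin n)) : EuclideanSpace ℝ (Fin n) :=
  fderiv ℝ (gradient φ) x d

section aux

set_option linter.unusedSectionVars false


variable {E : Type*} [NormedAddCommGroup E] [InnerProductSpace ℝ E] [CompleteSpace E]

/-- 1-D first-order bound for a convex function along a segment. -/
lemma conv_deriv_le {h : E → ℝ} (hc : ConvexOn ℝ Set.univ h) (x v : E) {m : ℝ}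
    (hm : HasDerivAt (fun s : ℝ => h (x + s • v)) m 0) : m ≤ h (x + v) - h x := by
  have hqc : ConvexOn ℝ Set.univ (fun s : ℝ => h (x + s • v)) := by
    have h1 := hc.comp_affineMap (AffineMap.lineMap x (x + v))
    have he : (h ∘ (AffineMap.lineMap x (x + v) : ℝ →ᵃ[ℝ] E)) = fun s : ℝ => h (x + s • v) := by
      funext s
      simp [AffineMap.lineMap_apply, add_comm]
    rw [he, Set.preimage_univ] at h1
    exact h1
  have h2 := hqc.le_slope_of_hasDerivAt (Set.mem_univ (0:ℝ)) (Set.mem_univ (1:ℝ)) one_pos hm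
  rw [slope_def_field] at h2
  simpa using h2

lemma curve_hasDerivAt (z v : E) : HasDerivAt (fun s : ℝ => z + s • v) v 0 := by
  simpa using ((hasDerivAt_id (0:ℝ)).smul_const v).const_add z

lemma grad_line_hasDerivAt {φ : E → ℝ} (hφ : ContDiff ℝ 2 φ) (z v : E) :
    HasDerivAt (fun s : ℝ => φ (z + s • v)) ⟪gradient φ z, v⟫ 0 := by
  have hF : HasFDerivAt φ (fderiv ℝ φ z) ((fun s : ℝ => z + s • v) 0) := by
    simpa using ((hφ.differentiable (by norm_num)) z).hasFDerivAt
  have h1 := hF.comp_hasDerivAt 0 (curve_hasDerivAt z v)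
  have hval : ⟪gradient φ z, v⟫ = fderiv ℝ φ z v :=
    InnerProductSpace.toDual_symm_apply
  rw [hval]
  exact h1

lemma normsq_line_hasDerivAt (σ : ℝ) (z v : E) :
    HasDerivAt (fun s : ℝ => σ / 2 * ‖z + s • v‖ ^ 2) (σ * ⟪z, v⟫) 0 := by
  have h1 := HasDerivAt.inner ℝ (curve_hasDerivAt z v) (curve_hasDerivAt z v)
  have h2 := h1.const_mul (σ / 2)
  have he : (fun s : ℝ => σ / 2 * ⟪z + s • v, z + s • v⟫) =
      fun s : ℝ => σ / 2 * ‖z + s • v‖ ^ 2 := by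
    funext s; rw [real_inner_self_eq_norm_sq]
  rw [he] at h2
  have : σ / 2 * (⟪z + (0:ℝ) • v, v⟫ + ⟪v, z + (0:ℝ) • v⟫) = σ * ⟪z, v⟫ := by
    simp [real_inner_comm]; ring
  rwa [this] at h2

/-- Strong monotonicity of the gradient of a `σ`-strongly convex `C²` function. -/
lemma strong_mono {φ : E → ℝ} {σ : ℝ} (hφ : ContDiff ℝ 2 φ)
    (hφsc : ConvexOn ℝ Set.univ (fun y => φ y - σ / 2 * ‖y‖ ^ 2)) (x y : E) :
    σ * ‖y - x‖ ^ 2 ≤ ⟪gradient φ y - gradient φ x, y - x⟫ := by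
  set v := y - x with hveq
  have e1 : x + v = y := by rw [hveq]; abel
  have e2 : y + -v = x := by rw [hveq]; abel
  have H1 := conv_deriv_le hφsc x v
    ((grad_line_hasDerivAt hφ x v).sub (normsq_line_hasDerivAt σ x v))
  have H2 := conv_deriv_le hφsc y (-v)
    ((grad_line_hasDerivAt hφ y (-v)).sub (normsq_line_hasDerivAt σ y (-v)))
  rw [e1] at H1
  rw [e2] at H2
  simp only [inner_neg_right] at H2
  have hv : ⟪y, v⟫ - ⟪x, v⟫ = ‖v‖ ^ 2 := by
    rw [← inner_sub_left, ← hveq, real_inner_self_eq_norm_sq]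
  have hv2 : σ * ⟪y, v⟫ - σ * ⟪x, v⟫ = σ * ‖v‖ ^ 2 := by rw [← mul_sub, hv]
  rw [inner_sub_left]
  linarith

/-- Hessian lower bound from strong convexity. -/
lemma hess_lower {φ : E → ℝ} {σ : ℝ} (hφ : ContDiff ℝ 2 φ)
    (hφsc : ConvexOn ℝ Set.univ (fun y => φ y - σ / 2 * ‖y‖ ^ 2)) (x d : E) :
    σ * ‖d‖ ^ 2 ≤ ⟪fderiv ℝ (gradient φ) x d, d⟫ := by
  have hgrad : ContDiff ℝ 1 (gradient φ) := by
    have h1 : ContDiff ℝ 1 (fderiv ℝ φ) := hφ.fderiv_right (by norm_num)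
    exact ((InnerProductSpace.toDual ℝ E).symm.contDiff).comp h1
  have hG : HasFDerivAt (gradient φ) (fderiv ℝ (gradient φ) x) ((fun s : ℝ => x + s • d) 0) := by
    simpa using ((hgrad.differentiable (by norm_num)) x).hasFDerivAt
  have h1 := hG.comp_hasDerivAt 0 (curve_hasDerivAt x d)
  have hψ : HasDerivAt (fun s : ℝ => ⟪gradient φ (x + s • d), d⟫)
      ⟪fderiv ℝ (gradient φ) x d, d⟫ 0 := by
    have := HasDerivAt.inner ℝ h1 (hasDerivAt_const (0:ℝ) d)
    simpa [Function.comp] using this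
  have htend := hasDerivAt_iff_tendsto_slope.mp hψ
  refine ge_of_tendsto htend ?_
  filter_upwards [self_mem_nhdsWithin] with s hs
  have hsne : s ≠ 0 := hs
  have key := strong_mono hφ hφsc x (x + s • d)
  have e1 : x + s • d - x = s • d := by abel
  rw [e1] at key
  have key2 : σ * (s ^ 2 * ‖d‖ ^ 2) ≤
      s * (⟪gradient φ (x + s • d), d⟫ - ⟪gradient φ (x + (0:ℝ) • d), d⟫) := by
    have hn : ‖s • d‖ ^ 2 = s ^ 2 * ‖d‖ ^ 2 := by
      rw [norm_smul]; rw [mul_pow]; simp [sq_abs]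
    have hi : ⟪gradient φ (x + s • d) - gradient φ x, s • d⟫ =
        s * (⟪gradient φ (x + s • d), d⟫ - ⟪gradient φ (x + (0:ℝ) • d), d⟫) := by
      rw [real_inner_smul_right, inner_sub_left]
      simp
    rw [hn, hi] at key
    exact key
  have hs2 : (0:ℝ) < s ^ 2 := by positivity
  rw [slope_def_field, sub_zero]
  have he : ((fun s : ℝ => ⟪gradient φ (x + s • d), d⟫) s -
      (fun s : ℝ => ⟪gradient φ (x + s • d), d⟫) 0) / s =
      (s * ((fun s : ℝ => ⟪gradient φ (x + s • d), d⟫) s -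
        (fun s : ℝ => ⟪gradient φ (x + s • d), d⟫) 0)) / s ^ 2 := by
    field_simp
  rw [he, le_div_iff₀ hs2]
  simp only at key2 ⊢
  nlinarith [key2]

end aux

theorem abpg_global_subsequential_convergence_i_ii {n : ℕ}
    (φ f g : EuclideanSpace ℝ (Fin n) → ℝ) (σ : ℝ) (hσ : 0 < σ)
    (hφ : ContDiff ℝ 2 φ)
    (hφsc : ConvexOn ℝ Set.univ (fun y => φ y - σ / 2 * ‖y‖ ^ 2))
    (hf : ContDiff ℝ 1 f) (hg : ConvexOn ℝ Set.univ g)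
    (Ψ : EuclideanSpace ℝ (Fin n) → ℝ) (hΨ : Ψ = fun y => f y + g y)
    (hbdd : BddBelow (Set.range Ψ))
    (hlevel : ∀ r : ℝ, Bornology.IsBounded {y | Ψ y ≤ r})
    (lam : ℝ) (hlam : 0 < lam) (α : ℝ) (hα : α ∈ Set.Ioo (0 : ℝ) 1)
    (tmin : ℝ) (htmin : tmin ∈ Set.Ioc (0 : ℝ) 1)
    (x d : ℕ → EuclideanSpace ℝ (Fin n)) (t : ℕ → ℝ)
    (ht : ∀ k, t k ∈ Set.Icc tmin 1)
    (hd : ∀ k, ∀ u : EuclideanSpace ℝ (Fin n),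
      ⟪gradient f (x k), d k⟫ + g (x k + d k)
          + (1 / (2 * lam)) * ⟪hessApply φ (x k) (d k), d k⟫ ≤
        ⟪gradient f (x k), u⟫ + g (x k + u)
          + (1 / (2 * lam)) * ⟪hessApply φ (x k) u, u⟫)
    (hupd : ∀ k, x (k + 1) = x k + t k • d k)
    (hsuff : ∀ k, Ψ (x (k + 1)) ≤
      Ψ (x k) + α * t k * (⟪gradient f (x k), d k⟫ + g (x k + d k) - g (x k))) :
    Bornology.IsBounded (Set.range x) ∧
      Summable (fun k => ‖d k‖ ^ 2) ∧
      Filter.Tendsto (fun k => ‖d k‖) Filter.atTop (nhds 0) := by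
  obtain ⟨hα0, hα1⟩ := hα
  obtain ⟨htmin0, htmin1⟩ := htmin
  have hH : ∀ k, σ * ‖d k‖ ^ 2 ≤ ⟪hessApply φ (x k) (d k), d k⟫ := fun k =>
    hess_lower hφ hφsc (x k) (d k)
  -- decrease per step
  have hA : ∀ k, ⟪gradient f (x k), d k⟫ + g (x k + d k) - g (x k)
      ≤ -(σ / (2 * lam)) * ‖d k‖ ^ 2 := by
    intro k
    have h0 := hd k 0
    simp only [hessApply, inner_zero_left, inner_zero_right, map_zero, add_zero,
      mul_zero, zero_add] at h0
    have hpos : (0:ℝ) < 1 / (2 * lam) := by positivity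
    have h2 : (1 / (2 * lam)) * (σ * ‖d k‖ ^ 2) ≤
        (1 / (2 * lam)) * ⟪hessApply φ (x k) (d k), d k⟫ :=
      mul_le_mul_of_nonneg_left (hH k) hpos.le
    have he : (1 / (2 * lam)) * (σ * ‖d k‖ ^ 2) = (σ / (2 * lam)) * ‖d k‖ ^ 2 := by
      field_simp
    simp only [hessApply] at h0 h2 ⊢
    linarith [h2, h0, he]
  set c : ℝ := α * tmin * (σ / (2 * lam)) with hc
  have hcpos : 0 < c := by positivity
  have hstep : ∀ k, Ψ (x (k + 1)) + c * ‖d k‖ ^ 2 ≤ Ψ (x k) := by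
    intro k
    have hA' := hA k
    have hsf := hsuff k
    have htk := ht k
    have hd2 : (0:ℝ) ≤ ‖d k‖ ^ 2 := sq_nonneg _
    have hAneg : ⟪gradient f (x k), d k⟫ + g (x k + d k) - g (x k) ≤ 0 := by
      nlinarith [hA', hd2, div_nonneg hσ.le (by linarith : (0:ℝ) ≤ 2 * lam)]
    have h1 : α * t k * (⟪gradient f (x k), d k⟫ + g (x k + d k) - g (x k)) ≤
        α * tmin * (⟪gradient f (x k), d k⟫ + g (x k + d k) - g (x k)) := by
      nlinarith [mul_nonneg (mul_nonneg hα0.le (sub_nonneg.mpr htk.1)) (neg_nonneg.mpr hAneg)]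
    have h2 : α * tmin * (⟪gradient f (x k), d k⟫ + g (x k + d k) - g (x k)) ≤
        α * tmin * (-(σ / (2 * lam)) * ‖d k‖ ^ 2) := by
      have : (0:ℝ) ≤ α * tmin := by positivity
      nlinarith [hA', this]
    have h3 : α * tmin * (-(σ / (2 * lam)) * ‖d k‖ ^ 2) = -(c * ‖d k‖ ^ 2) := by
      rw [hc]; ring
    linarith
  have hmono : Antitone (fun k => Ψ (x k)) := by
    apply antitone_nat_of_succ_le
    intro k
    have := hstep k
    nlinarith [sq_nonneg ‖d k‖, hcpos]
  constructor
  · refine (hlevel (Ψ (x 0))).subset ?_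
    rintro _ ⟨k, rfl⟩
    exact hmono (Nat.zero_le k)
  obtain ⟨B, hB⟩ := hbdd
  have hpartial : ∀ N, ∑ k ∈ Finset.range N, c * ‖d k‖ ^ 2 ≤ Ψ (x 0) - Ψ (x N) := by
    intro N
    induction N with
    | zero => simp
    | succ N ih =>
      rw [Finset.sum_range_succ]
      have := hstep N
      linarith
  have hsummable : Summable (fun k => c * ‖d k‖ ^ 2) := by
    apply summable_of_sum_range_le (c := Ψ (x 0) - B)
    · intro k; positivity
    · intro N
      have hBN : B ≤ Ψ (x N) := hB (Set.mem_range_self (x N))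
      have := hpartial N
      linarith
  have hsum2 : Summable (fun k => ‖d k‖ ^ 2) := by
    have h1 := hsummable.mul_left c⁻¹
    have he : (fun k => c⁻¹ * (c * ‖d k‖ ^ 2)) = fun k => ‖d k‖ ^ 2 := by
      funext k
      rw [← mul_assoc, inv_mul_cancel₀ (ne_of_gt hcpos), one_mul]
    rwa [he] at h1
  refine ⟨hsum2, ?_⟩
  have h0 := hsum2.tendsto_atTop_zero
  have h1 : Filter.Tendsto (fun k => Real.sqrt (‖d k‖ ^ 2)) Filter.atTop (nhds (Real.sqrt 0)) :=
    (Real.continuous_sqrt.continuousAt).tendsto.comp h0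
  simpa [Real.sqrt_sq, norm_nonneg] using h1
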